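/- For n ≥ 3 and v in the open unit ball of ℝⁿ, the Möbius matrix equals the normalized squared Lorentz boost: μ_{n,v} = B(v)² / tr(B(v)²), where tr B(v)² = (n−3) + 4γ_v². -/

import Mathlib

open scoped RealInnerProductSpace

noncomputable def gam {n : ℕ} (v : EuclideanSpace ℝ (Fin n)) : ℝ :=
  1 / Real.sqrt (1 - ‖v‖ ^ 2)

noncomputable def eAdd {n : ℕ} (u v : EuclideanSpace ℝ (Fin n)) :
    EuclideanSpace ℝ (Fin n) :=
  (1 / (1 + ⟪u, v⟫)) •
    (u + (1 / gam u) • v + ((gam u / (1 + gam u)) * ⟪u, v⟫) • u)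

noncomputable def boost {n : ℕ} (v : EuclideanSpace ℝ (Fin n)) :
    Matrix (Unit ⊕ Fin n) (Unit ⊕ Fin n) ℝ :=
  Matrix.fromBlocks
    (Matrix.of fun _ _ => gam v)
    (Matrix.of fun _ j => gam v * v j)
    (Matrix.of fun i _ => gam v * v i)
    (1 + Matrix.of fun i j => (gam v) ^ 2 / (1 + gam v) * v i * v j)

noncomputable def mobius {n : ℕ} (v : EuclideanSpace ℝ (Fin n)) :
    Matrix (Unit ⊕ Fin n) (Unit ⊕ Fin n) ℝ :=
  (2 * (gam v) ^ 2 / (((n : ℝ) - 3) + 4 * (gam v) ^ 2)) •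
    Matrix.fromBlocks
      (Matrix.of fun _ _ => 1 - 1 / (2 * (gam v) ^ 2))
      (Matrix.of fun _ j => v j)
      (Matrix.of fun i _ => v i)
      ((1 / (2 * (gam v) ^ 2)) • 1 + Matrix.of fun i j => v i * v j)

lemma boost_sq_eq {n : ℕ} (v : EuclideanSpace ℝ (Fin n)) (hv : ‖v‖ < 1) :
    boost v ^ 2 = Matrix.fromBlocks
      (Matrix.of fun _ _ => 2 * (gam v)^2 - 1)
      (Matrix.of fun _ j => 2 * (gam v)^2 * v j)
      (Matrix.of fun i _ => 2 * (gam v)^2 * v i)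
      (1 + Matrix.of fun i j => 2 * (gam v)^2 * v i * v j) := by
  have hs1 : ‖v‖^2 < 1 := by nlinarith [norm_nonneg v]
  have h1s : (0:ℝ) < 1 - ‖v‖^2 := by linarith
  have hgpos : 0 < gam v := by rw [gam]; positivity
  have hg2 : (gam v)^2 * (1 - ‖v‖^2) = 1 := by
    rw [gam, div_pow, one_pow, Real.sq_sqrt h1s.le]
    field_simp
  have hsum : ∑ i, v i * v i = ‖v‖^2 := by
    rw [← real_inner_self_eq_norm_sq, PiLp.inner_apply]
    simp [RCLike.inner_apply, sq]
  set g := gam v with hgdef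
  have h1g : (1 : ℝ) + g ≠ 0 := by positivity
  have hgs : g^2 * ‖v‖^2 = g^2 - 1 := by linear_combination -hg2
  rw [sq, boost, Matrix.fromBlocks_multiply]
  ext i j
  rcases i with i | i <;> rcases j with j | j
  · simp only [Matrix.fromBlocks_apply₁₁, Matrix.add_apply, Matrix.mul_apply, Matrix.of_apply,
      Finset.univ_unique, Finset.sum_singleton]
    have h : ∑ k, g * v k * (g * v k) = g^2 * ∑ k, v k * v k := by
      rw [Finset.mul_sum]; congr 1; funext k; ring
    rw [h, hsum]; linear_combination hgs
  · simp only [Matrix.fromBlocks_apply₁₂, Matrix.add_apply, Matrix.mul_apply, Matrix.of_apply,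
      Finset.univ_unique, Finset.sum_singleton, Matrix.one_apply]
    have h : ∑ k, g * v k * ((if k = j then (1:ℝ) else 0) + g^2/(1+g) * v k * v j)
        = g * v j + g^2/(1+g) * (∑ k, v k * v k) * (g * v j) := by
      rw [show (fun k => g * v k * ((if k = j then (1:ℝ) else 0) + g^2/(1+g) * v k * v j))
          = fun k => (if k = j then g * v k else 0) + g^2/(1+g) * (v k * v k) * (g * v j) from by
        funext k; split <;> ring]
      rw [Finset.sum_add_distrib, Finset.sum_ite_eq' Finset.univ j (fun k => g * v k),
        ← Finset.sum_mul, ← Finset.mul_sum]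
      simp
    rw [h, hsum]
    have hc : g * g + (g + g^2/(1+g) * ‖v‖^2 * g) = 2 * g^2 := by
      field_simp
      linear_combination hgs
    linear_combination (v j) * hc
  · simp only [Matrix.fromBlocks_apply₂₁, Matrix.add_apply, Matrix.mul_apply, Matrix.of_apply,
      Finset.univ_unique, Finset.sum_singleton, Matrix.one_apply]
    have h : ∑ k, ((if i = k then (1:ℝ) else 0) + g^2/(1+g) * v i * v k) * (g * v k)
        = g * v i + g^2/(1+g) * (∑ k, v k * v k) * (g * v i) := by
      rw [show (fun k => ((if i = k then (1:ℝ) else 0) + g^2/(1+g) * v i * v k) * (g * v k))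
          = fun k => (if i = k then g * v k else 0) + g^2/(1+g) * (v k * v k) * (g * v i) from by
        funext k; split <;> ring]
      rw [Finset.sum_add_distrib, Finset.sum_ite_eq Finset.univ i (fun k => g * v k),
        ← Finset.sum_mul, ← Finset.mul_sum]
      simp
    rw [h, hsum]
    have hc : g * g + (g + g^2/(1+g) * ‖v‖^2 * g) = 2 * g^2 := by
      field_simp
      linear_combination hgs
    linear_combination (v i) * hc
  · simp only [Matrix.fromBlocks_apply₂₂, Matrix.add_apply, Matrix.mul_apply, Matrix.of_apply,
      Matrix.one_apply, Finset.univ_unique, Finset.sum_singleton, ← hgdef]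
    have h : ∑ k, ((if i = k then (1:ℝ) else 0) + g^2/(1+g) * v i * v k) *
        ((if k = j then (1:ℝ) else 0) + g^2/(1+g) * v k * v j)
        = (if i = j then (1:ℝ) else 0) + 2 * (g^2/(1+g)) * (v i * v j)
          + (g^2/(1+g))^2 * (∑ k, v k * v k) * (v i * v j) := by
      rw [show (fun k => ((if i = k then (1:ℝ) else 0) + g^2/(1+g) * v i * v k) *
          ((if k = j then (1:ℝ) else 0) + g^2/(1+g) * v k * v j))
          = fun k => ((if i = k then (if k = j then (1:ℝ) else 0) else 0)
            + ((if i = k then g^2/(1+g) * v k * v j else 0)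
            + ((if k = j then g^2/(1+g) * v i * v k else 0)
            + (g^2/(1+g))^2 * (v k * v k) * (v i * v j)))) from by
        funext k; split <;> split <;> ring]
      rw [Finset.sum_add_distrib, Finset.sum_add_distrib, Finset.sum_add_distrib,
        ← Finset.sum_mul, ← Finset.mul_sum,
        Finset.sum_ite_eq Finset.univ i, Finset.sum_ite_eq Finset.univ i,
        Finset.sum_ite_eq' Finset.univ j]
      simp only [Finset.mem_univ, if_true]
      ring
    rw [h, hsum]
    have hc : g * g + (2 * (g^2/(1+g)) + (g^2/(1+g))^2 * ‖v‖^2) = 2 * g^2 := by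
      field_simp
      linear_combination hgs
    linear_combination (v i * v j) * hc

theorem mobius_eq_normalized_boost_sq {n : ℕ} (hn : 3 ≤ n)
    (v : EuclideanSpace ℝ (Fin n)) (hv : ‖v‖ < 1) :
    mobius v = ((boost v ^ 2).trace)⁻¹ • (boost v ^ 2) ∧
      (boost v ^ 2).trace = ((n : ℝ) - 3) + 4 * (gam v) ^ 2 := by
  have hs1 : ‖v‖^2 < 1 := by nlinarith [norm_nonneg v]
  have h1s : (0:ℝ) < 1 - ‖v‖^2 := by linarith
  have hgpos : 0 < gam v := by rw [gam]; positivity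
  have hg2 : (gam v)^2 * (1 - ‖v‖^2) = 1 := by
    rw [gam, div_pow, one_pow, Real.sq_sqrt h1s.le]
    field_simp
  have hsum : ∑ i, v i * v i = ‖v‖^2 := by
    rw [← real_inner_self_eq_norm_sq, PiLp.inner_apply]
    simp [RCLike.inner_apply, sq]
  set g := gam v with hgdef
  have hgs : g^2 * ‖v‖^2 = g^2 - 1 := by linear_combination -hg2
  have hn3 : (3:ℝ) ≤ (n:ℝ) := by exact_mod_cast hn
  have ht : (0:ℝ) < ((n : ℝ) - 3) + 4 * g ^ 2 := by nlinarith [hgpos]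
  have htrace : (boost v ^ 2).trace = ((n : ℝ) - 3) + 4 * g ^ 2 := by
    rw [boost_sq_eq v hv, Matrix.trace]
    rw [Fintype.sum_sum_type]
    simp only [Matrix.diag_apply, Matrix.fromBlocks_apply₁₁, Matrix.fromBlocks_apply₂₂,
      Matrix.of_apply, Matrix.add_apply, Matrix.one_apply_eq, Finset.univ_unique,
      Finset.sum_singleton, ← hgdef]
    have h2 : ∑ x : Fin n, 2 * g ^ 2 * v x * v x = 2 * g ^ 2 * ‖v‖ ^ 2 := by
      rw [← hsum, Finset.mul_sum]
      exact Finset.sum_congr rfl fun k _ => by ring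
    rw [Finset.sum_add_distrib, h2]
    simp only [Finset.sum_const, Finset.card_univ, Fintype.card_fin, nsmul_eq_mul, mul_one]
    linear_combination 2 * hgs
  refine ⟨?_, htrace⟩
  rw [htrace, boost_sq_eq v hv, mobius, ← hgdef]
  have hg0 : g ≠ 0 := ne_of_gt hgpos
  have ht0 : ((n : ℝ) - 3) + 4 * g ^ 2 ≠ 0 := ne_of_gt ht
  ext i j
  rcases i with i | i <;> rcases j with j | j <;>
    simp only [Matrix.smul_apply, Matrix.fromBlocks_apply₁₁, Matrix.fromBlocks_apply₁₂,
      Matrix.fromBlocks_apply₂₁, Matrix.fromBlocks_apply₂₂, Matrix.of_apply, Matrix.add_apply,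
      Matrix.one_apply, smul_eq_mul]
  all_goals field_simp
  all_goals ring
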